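/- Let Z₁,…,Z_ℓ be binary (0/1-valued) random variables and for each i let pᵢ = Pr(Zᵢ = 1 | Z₁,…,Z_{i−1}). Let Z = ∑ᵢ Zᵢ and B = ∑ᵢ pᵢ. If b ≥ 0 is such that B ≥ b almost surely, then for any 0 < δ < 1, Pr(Z < (1−δ)·b) < e^{−b·δ²/2}. -/

import Mathlib

open MeasureTheory
set_option maxHeartbeats 2000000

lemma aux_exp_lt_quad {x : ℝ} (hx : 0 < x) : Real.exp (-x) < 1 - x + x ^ 2 / 2 := by
  have hmono : StrictMonoOn (fun y : ℝ => 1 - y + y ^ 2 / 2 - Real.exp (-y)) (Set.Ici 0) := by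
    apply strictMonoOn_of_deriv_pos (convex_Ici 0)
    · fun_prop
    · intro y hy
      rw [interior_Ici] at hy
      have h1 : HasDerivAt (fun y : ℝ => Real.exp (-y)) (-Real.exp (-y)) y := by
        have := (hasDerivAt_neg y).exp; rw [mul_neg_one] at this; exact this
      have h2 : HasDerivAt (fun y : ℝ => 1 - y + y ^ 2 / 2 - Real.exp (-y))
          (0 - 1 + 2 * y ^ 1 / 2 - -Real.exp (-y)) y := by
        exact (((hasDerivAt_const y (1:ℝ)).sub (hasDerivAt_id y)).add
          ((hasDerivAt_pow 2 y).div_const 2)).sub h1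
      rw [h2.deriv]
      have hy' : 0 < y := hy
      have h3 : -y + 1 < Real.exp (-y) := Real.add_one_lt_exp (by linarith)
      simp only [pow_one]
      linarith
  have h := hmono (Set.self_mem_Ici) (Set.mem_Ici.mpr hx.le) hx
  simp only [neg_zero, Real.exp_zero] at h
  norm_num at h
  linarith

theorem chernoff_lower_dependent
    {Ω : Type*} [MeasurableSpace Ω] (μ : Measure Ω) [IsProbabilityMeasure μ]
    (ℓ : ℕ) (Z : Fin ℓ → Ω → ℝ)
    (hmeas : ∀ i, Measurable (Z i))
    (hbin : ∀ i ω, Z i ω = 0 ∨ Z i ω = 1)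
    (p : Fin ℓ → Ω → ℝ)
    (hp : ∀ i, p i =
      μ[Z i | ⨆ j : Fin ℓ, ⨆ _ : j < i, MeasurableSpace.comap (Z j) inferInstance])
    (b : ℝ) (hb : 0 ≤ b)
    (hB : ∀ᵐ ω ∂μ, b ≤ (∑ i, p i ω))
    (δ : ℝ) (hδ0 : 0 < δ) (hδ1 : δ < 1) :
    (μ {ω | (∑ i, Z i ω) < (1 - δ) * b}).toReal
      < Real.exp (-b * δ ^ 2 / 2) := by
  classical
  have hZ0 : ∀ i ω, 0 ≤ Z i ω := by
    intro i ω; rcases hbin i ω with h | h <;> rw [h] <;> norm_num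
  have hZ1 : ∀ i ω, Z i ω ≤ 1 := by
    intro i ω; rcases hbin i ω with h | h <;> rw [h] <;> norm_num
  rcases eq_or_lt_of_le hb with hb0 | hbpos
  · -- b = 0 case
    have hempty : {ω | (∑ i, Z i ω) < (1 - δ) * b} = ∅ := by
      ext ω
      simp only [Set.mem_setOf_eq, Set.mem_empty_iff_false, iff_false, not_lt, ← hb0, mul_zero]
      exact Finset.sum_nonneg fun i _ => hZ0 i ω
    rw [hempty, measure_empty]
    simp only [ENNReal.toReal_zero]
    exact Real.exp_pos _
  -- main case : 0 < b
  set F : Fin ℓ → MeasurableSpace Ω :=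
    fun i => ⨆ j : Fin ℓ, ⨆ _ : j < i, MeasurableSpace.comap (Z j) inferInstance with hFdef
  have hp' : ∀ i, p i = μ[Z i | F i] := hp
  have hFle : ∀ i, F i ≤ (inferInstance : MeasurableSpace Ω) :=
    fun i => iSup₂_le fun j _ => measurable_iff_comap_le.mp (hmeas j)
  have hFmono : ∀ i j : Fin ℓ, i ≤ j → F i ≤ F j := by
    intro i j hij
    refine iSup₂_le fun k hk => ?_
    exact le_iSup₂ (f := fun k (_ : k < j) => MeasurableSpace.comap (Z k) inferInstance)
      k (lt_of_lt_of_le hk hij)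
  have hZF : ∀ i j : Fin ℓ, i < j → Measurable[F j] (Z i) := by
    intro i j hij
    exact measurable_iff_comap_le.mpr
      (le_iSup₂ (f := fun k (_ : k < j) => MeasurableSpace.comap (Z k) inferInstance) i hij)
  have hZint : ∀ i, Integrable (Z i) μ := by
    intro i
    refine Integrable.mono' (integrable_const 1) (hmeas i).aestronglyMeasurable ?_
    exact Filter.Eventually.of_forall fun ω => by
      rw [Real.norm_eq_abs, abs_of_nonneg (hZ0 i ω)]; exact hZ1 i ω
  have hpSM : ∀ i, StronglyMeasurable[F i] (p i) := fun i => (hp' i) ▸ stronglyMeasurable_condExp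
  have hpmeas : ∀ i, Measurable (p i) :=
    fun i => ((hpSM i).mono (hFle i)).measurable
  have hp0 : ∀ i, ∀ᵐ ω ∂μ, 0 ≤ p i ω := by
    intro i
    rw [hp' i]
    exact condExp_nonneg (Filter.Eventually.of_forall fun ω => hZ0 i ω)
  have hp1 : ∀ i, ∀ᵐ ω ∂μ, p i ω ≤ 1 := by
    intro i
    rw [hp' i]
    have h := condExp_mono (m := F i) (μ := μ) (hZint i) (integrable_const 1)
      (Filter.Eventually.of_forall fun ω => hZ1 i ω)
    rw [condExp_const (hFle i) (1:ℝ)] at h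
    exact h
  set c : ℝ := Real.exp (-δ) - 1 with hcdef
  have hc0 : c < 0 := by
    have : Real.exp (-δ) < 1 := by
      rw [← Real.exp_zero]; exact Real.exp_lt_exp.mpr (by linarith)
    simp only [hcdef]; linarith
  have hc1 : -1 < c := by
    have := Real.exp_pos (-δ); simp only [hcdef]; linarith
  have hfval : ∀ i ω, 1 + c * Z i ω = Real.exp (-(δ * Z i ω)) := by
    intro i ω
    rcases hbin i ω with h | h <;> rw [h] <;> simp [hcdef]
  have hfpos : ∀ i ω, 0 < 1 + c * Z i ω := by
    intro i ω; rw [hfval]; exact Real.exp_pos _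
  set g : Fin ℓ → Ω → ℝ :=
    fun i ω => Real.exp (-(c * p i ω)) * (1 + c * Z i ω) with hgdef
  have hgmeas : ∀ i, Measurable (g i) := by
    intro i
    exact (Real.measurable_exp.comp ((hpmeas i).const_mul c).neg).mul
      (measurable_const.add ((hmeas i).const_mul c))
  have hgpos : ∀ i ω, 0 < g i ω := fun i ω => mul_pos (Real.exp_pos _) (hfpos i ω)
  have hpae : ∀ᵐ ω ∂μ, ∀ i, 0 ≤ p i ω ∧ p i ω ≤ 1 :=
    ae_all_iff.mpr fun i => (hp0 i).and (hp1 i)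
  have hgbound : ∀ᵐ ω ∂μ, ∀ i, g i ω ≤ Real.exp 1 := by
    filter_upwards [hpae] with ω hω i
    have h1 : -(c * p i ω) ≤ 1 := by nlinarith [(hω i).1, (hω i).2]
    have h2 : Real.exp (-(c * p i ω)) ≤ Real.exp 1 := Real.exp_le_exp.mpr h1
    have h3 : 1 + c * Z i ω ≤ 1 := by nlinarith [hZ0 i ω]
    calc g i ω ≤ Real.exp (-(c * p i ω)) * 1 :=
          mul_le_mul_of_nonneg_left h3 (Real.exp_pos _).le
      _ ≤ Real.exp 1 := by rw [mul_one]; exact h2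
  have hgint : ∀ s : Finset (Fin ℓ), Integrable (fun ω => ∏ i ∈ s, g i ω) μ := by
    intro s
    refine Integrable.mono' (integrable_const (Real.exp 1 ^ ℓ))
      (Finset.measurable_prod s fun i _ => hgmeas i).aestronglyMeasurable ?_
    filter_upwards [hgbound] with ω hω
    rw [Real.norm_eq_abs, abs_of_nonneg (Finset.prod_nonneg fun i _ => (hgpos i ω).le)]
    calc ∏ i ∈ s, g i ω ≤ ∏ _i ∈ s, Real.exp 1 :=
          Finset.prod_le_prod (fun i _ => (hgpos i ω).le) (fun i _ => hω i)
      _ = Real.exp 1 ^ s.card := Finset.prod_const _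
      _ ≤ Real.exp 1 ^ ℓ := by
          apply pow_le_pow_right₀ (by linarith [Real.add_one_le_exp 1])
          simpa using Finset.card_le_univ s
  -- conditional expectation of g i is ≤ 1
  have hcond : ∀ i, ∀ᵐ ω ∂μ, (μ[g i | F i]) ω ≤ 1 := by
    intro i
    have hgeq : g i = (fun ω => Real.exp (-(c * p i ω))) * (fun ω => 1 + c * Z i ω) := rfl
    have heSM : StronglyMeasurable[F i] (fun ω => Real.exp (-(c * p i ω))) :=
      Real.continuous_exp.comp_stronglyMeasurable ((hpSM i).const_mul c).neg
    have hfint : Integrable (fun ω => 1 + c * Z i ω) μ :=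
      (integrable_const 1).add ((hZint i).const_mul c)
    have hgint1 : Integrable (g i) μ := by
      have := hgint {i}
      simpa using this
    have hpull := condExp_mul_of_stronglyMeasurable_left (μ := μ) heSM (hgeq ▸ hgint1) hfint
    have hEf : μ[(fun ω => 1 + c * Z i ω) | F i] =ᵐ[μ] fun ω => 1 + c * p i ω := by
      have h1 := condExp_add (μ := μ) (m := F i) (integrable_const (1:ℝ))
        ((hZint i).const_mul c)
      have h2 : μ[(fun ω => c * Z i ω) | F i] =ᵐ[μ] fun ω => c * p i ω := by
        have h3 := condExp_smul (μ := μ) (m := F i) c (Z i)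
        rw [hp' i]
        refine h3.trans ?_
        filter_upwards with ω
        simp [smul_eq_mul]
      have h4 : (fun ω => 1 + c * Z i ω) = (fun _ => (1:ℝ)) + fun ω => c * Z i ω := rfl
      rw [h4]
      refine h1.trans ?_
      rw [condExp_const (hFle i) (1:ℝ)]
      filter_upwards [h2] with ω hω
      simp [hω]
    rw [hgeq]
    filter_upwards [hpull, hEf, hp0 i] with ω hω hω2 hω3
    rw [hω]
    simp only [Pi.mul_apply]
    rw [hω2]
    have hle : 1 + c * p i ω ≤ Real.exp (c * p i ω) := by
      have := Real.add_one_le_exp (c * p i ω); linarith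
    calc Real.exp (-(c * p i ω)) * (1 + c * p i ω)
        ≤ Real.exp (-(c * p i ω)) * Real.exp (c * p i ω) :=
          mul_le_mul_of_nonneg_left hle (Real.exp_pos _).le
      _ = 1 := by rw [← Real.exp_add]; simp
  -- induction : E[∏_{i < n} g i] ≤ 1
  have key : ∀ n : ℕ, n ≤ ℓ →
      ∫ ω, ∏ i ∈ Finset.univ.filter (fun i : Fin ℓ => (i : ℕ) < n), g i ω ∂μ ≤ 1 := by
    intro n
    induction n with
    | zero =>
      intro _
      simp
    | succ n ih =>
      intro hn
      have hn' : n < ℓ := hn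
      set N : Fin ℓ := ⟨n, hn'⟩ with hNdef
      have hsets : Finset.univ.filter (fun i : Fin ℓ => (i : ℕ) < n + 1)
          = insert N (Finset.univ.filter (fun i : Fin ℓ => (i : ℕ) < n)) := by
        ext i
        simp only [Finset.mem_filter, Finset.mem_univ, true_and, Finset.mem_insert,
          Nat.lt_succ_iff_lt_or_eq, hNdef, Fin.ext_iff]
        tauto
      have hNnot : N ∉ Finset.univ.filter (fun i : Fin ℓ => (i : ℕ) < n) := by
        simp [hNdef]
      set G : Ω → ℝ := fun ω => ∏ i ∈ Finset.univ.filter (fun i : Fin ℓ => (i : ℕ) < n), g i ω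
        with hGdef
      have hGSM : StronglyMeasurable[F N] G := by
        apply Finset.stronglyMeasurable_fun_prod
        intro i hi
        have hiN : i < N := by
          simp only [Finset.mem_filter] at hi
          exact hi.2
        have h1 : StronglyMeasurable[F N] (fun ω => Real.exp (-(c * p i ω))) :=
          Real.continuous_exp.comp_stronglyMeasurable
            (((hpSM i).mono (hFmono i N hiN.le)).const_mul c).neg
        have h2 : StronglyMeasurable[F N] (fun ω => 1 + c * Z i ω) :=
          ((hZF i N hiN).stronglyMeasurable.const_mul c).const_add 1
        exact h1.mul h2
      have hGint : Integrable G μ := hgint _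
      have hGnonneg : ∀ ω, 0 ≤ G ω := fun ω => Finset.prod_nonneg fun i _ => (hgpos i ω).le
      have hGgint : Integrable (fun ω => G ω * g N ω) μ := by
        have := hgint (insert N (Finset.univ.filter (fun i : Fin ℓ => (i : ℕ) < n)))
        refine this.congr ?_
        filter_upwards with ω
        rw [Finset.prod_insert hNnot, mul_comm]
      have hpull := condExp_mul_of_stronglyMeasurable_left (μ := μ) hGSM
        (show Integrable (G * g N) μ from hGgint) (by simpa using hgint {N})
      calc ∫ ω, ∏ i ∈ Finset.univ.filter (fun i : Fin ℓ => (i : ℕ) < n + 1), g i ω ∂μ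
          = ∫ ω, (G * g N) ω ∂μ := by
            congr 1
            ext ω
            rw [hsets, Finset.prod_insert hNnot]
            simp [hGdef, mul_comm]
        _ = ∫ ω, (μ[G * g N | F N]) ω ∂μ := (integral_condExp (hFle N)).symm
        _ ≤ ∫ ω, G ω ∂μ := by
            apply integral_mono_ae integrable_condExp hGint
            filter_upwards [hpull, hcond N] with ω hω1 hω2
            rw [hω1]
            simp only [Pi.mul_apply]
            calc G ω * (μ[g N | F N]) ω ≤ G ω * 1 :=
                  mul_le_mul_of_nonneg_left hω2 (hGnonneg ω)
              _ = G ω := mul_one _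
        _ ≤ 1 := ih (le_of_lt hn')
  have hall : ∫ ω, ∏ i, g i ω ∂μ ≤ 1 := by
    have h := key ℓ le_rfl
    have : Finset.univ.filter (fun i : Fin ℓ => (i : ℕ) < ℓ) = Finset.univ :=
      Finset.filter_true_of_mem fun i _ => i.isLt
    rwa [this] at h
  -- W = exp(-δ ∑ Z)
  set W : Ω → ℝ := fun ω => Real.exp (-(δ * ∑ i, Z i ω)) with hWdef
  have hWeq : ∀ ω, W ω = ∏ i, (1 + c * Z i ω) := by
    intro ω
    rw [hWdef]
    simp only
    rw [show -(δ * ∑ i, Z i ω) = ∑ i, -(δ * Z i ω) by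
      rw [Finset.mul_sum, ← Finset.sum_neg_distrib]]
    rw [Real.exp_sum]
    exact Finset.prod_congr rfl fun i _ => (hfval i ω).symm
  have hWpos : ∀ ω, 0 < W ω := fun ω => Real.exp_pos _
  have hWle1 : ∀ ω, W ω ≤ 1 := by
    intro ω
    rw [hWdef]
    simp only
    rw [← Real.exp_zero]
    apply Real.exp_le_exp.mpr
    simp only [Real.exp_zero, neg_nonpos]
    have : 0 ≤ ∑ i, Z i ω := Finset.sum_nonneg fun i _ => hZ0 i ω
    positivity
  have hWmeas : Measurable W :=
    Real.measurable_exp.comp ((Finset.measurable_sum Finset.univ fun i _ => hmeas i).const_mul δ).neg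
  have hWint : Integrable W μ := by
    refine Integrable.mono' (integrable_const 1) hWmeas.aestronglyMeasurable ?_
    exact Filter.Eventually.of_forall fun ω => by
      rw [Real.norm_eq_abs, abs_of_nonneg (hWpos ω).le]; exact hWle1 ω
  -- E[W] ≤ exp(c b)
  have hEW : ∫ ω, W ω ∂μ ≤ Real.exp (c * b) := by
    have hstep : ∀ᵐ ω ∂μ, Real.exp (-(c * b)) * W ω ≤ ∏ i, g i ω := by
      filter_upwards [hB] with ω hω
      have hprodsplit : ∏ i, g i ω
          = Real.exp (-(c * ∑ i, p i ω)) * ∏ i, (1 + c * Z i ω) := by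
        rw [hgdef]
        simp only
        rw [Finset.prod_mul_distrib]
        congr 1
        rw [show -(c * ∑ i, p i ω) = ∑ i, -(c * p i ω) by
          rw [Finset.mul_sum, ← Finset.sum_neg_distrib]]
        rw [Real.exp_sum]
      rw [hprodsplit, ← hWeq ω]
      apply mul_le_mul_of_nonneg_right _ (hWpos ω).le
      apply Real.exp_le_exp.mpr
      nlinarith
    have h2 : Real.exp (-(c * b)) * ∫ ω, W ω ∂μ ≤ 1 := by
      calc Real.exp (-(c * b)) * ∫ ω, W ω ∂μ
          = ∫ ω, Real.exp (-(c * b)) * W ω ∂μ := (integral_const_mul _ _).symm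
        _ ≤ ∫ ω, ∏ i, g i ω ∂μ := integral_mono_ae (hWint.const_mul _) (hgint _) hstep
        _ ≤ 1 := hall
    have h3 : (0:ℝ) < Real.exp (-(c * b)) := Real.exp_pos _
    rw [← le_div_iff₀' h3] at h2
    calc ∫ ω, W ω ∂μ ≤ 1 / Real.exp (-(c * b)) := h2
      _ = Real.exp (c * b) := by rw [one_div, ← Real.exp_neg, neg_neg]
  -- Markov
  set A : Set Ω := {ω | (∑ i, Z i ω) < (1 - δ) * b} with hAdef
  have hAmeas : MeasurableSet A :=
    measurableSet_lt (Finset.measurable_sum Finset.univ fun i _ => hmeas i) measurable_const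
  have hmarkov : (μ A).toReal * Real.exp (-(δ * ((1 - δ) * b))) ≤ Real.exp (c * b) := by
    have h1 : ∫ ω in A, Real.exp (-(δ * ((1 - δ) * b))) ∂μ ≤ ∫ ω in A, W ω ∂μ := by
      apply setIntegral_mono_on (integrableOn_const (measure_lt_top μ A).ne)
        hWint.integrableOn hAmeas
      intro ω hω
      rw [hWdef]
      simp only
      apply Real.exp_le_exp.mpr
      have : ∑ i, Z i ω < (1 - δ) * b := hω
      nlinarith
    have h2 : ∫ ω in A, W ω ∂μ ≤ ∫ ω, W ω ∂μ :=
      setIntegral_le_integral hWint (Filter.Eventually.of_forall fun ω => (hWpos ω).le)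
    have h3 : ∫ ω in A, Real.exp (-(δ * ((1 - δ) * b))) ∂μ
        = (μ A).toReal * Real.exp (-(δ * ((1 - δ) * b))) := by
      rw [setIntegral_const, smul_eq_mul]; rfl
    linarith
  have hCpos : (0:ℝ) < Real.exp (-(δ * ((1 - δ) * b))) := Real.exp_pos _
  have hfinal : (μ A).toReal ≤ Real.exp (c * b + δ * ((1 - δ) * b)) := by
    rw [Real.exp_add]
    rw [← le_div_iff₀ hCpos] at hmarkov
    calc (μ A).toReal ≤ Real.exp (c * b) / Real.exp (-(δ * ((1 - δ) * b))) := hmarkov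
      _ = Real.exp (c * b - -(δ * ((1 - δ) * b))) := (Real.exp_sub _ _).symm
      _ = Real.exp (c * b) * Real.exp (δ * ((1 - δ) * b)) := by
          rw [sub_neg_eq_add, Real.exp_add]
  have hexp : Real.exp (-δ) < 1 - δ + δ ^ 2 / 2 := aux_exp_lt_quad hδ0
  have hstrict : c * b + δ * ((1 - δ) * b) < -b * δ ^ 2 / 2 := by
    have hcb : Real.exp (-δ) = c + 1 := by rw [hcdef]; ring
    rw [hcb] at hexp
    nlinarith
  calc (μ A).toReal ≤ Real.exp (c * b + δ * ((1 - δ) * b)) := hfinal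
    _ < Real.exp (-b * δ ^ 2 / 2) := Real.exp_lt_exp.mpr hstrict
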